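/- Let G be a modular graph with at least three vertices. Then SWW_3(G) = ((|V(G)|−2)/4)·W(G) + ((|V(G)|−2)/8)·\overline{WW}(G) + (1/8)·\widehat{WW}(G). -/

import Mathlib

open Finset SimpleGraph Polynomial

/-- The Steiner distance of a vertex set `S`: the minimum number of edges of a
connected subgraph of `G` whose vertex set contains `S`. -/
noncomputable def steinerDist {V : Type*} (G : SimpleGraph V) (S : Set V) : ℕ :=
  sInf {n | ∃ H : G.Subgraph, H.Connected ∧ S ⊆ H.verts ∧ H.edgeSet.ncard = n}

/-- The Steiner `k`-Wiener index. -/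
noncomputable def SW {V : Type*} [Fintype V] [DecidableEq V] (k : ℕ) (G : SimpleGraph V) : ℕ :=
  ∑ S ∈ Finset.powersetCard k (Finset.univ : Finset V), steinerDist G (S : Set V)

/-- The Steiner `k`-hyper-Wiener index. -/
noncomputable def SWW {V : Type*} [Fintype V] [DecidableEq V] (k : ℕ) (G : SimpleGraph V) : ℝ :=
  (1/2) * ∑ S ∈ Finset.powersetCard k (Finset.univ : Finset V), (steinerDist G (S : Set V) : ℝ)
    + (1/2) * ∑ S ∈ Finset.powersetCard k (Finset.univ : Finset V), (steinerDist G (S : Set V) : ℝ) ^ 2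

/-- The Steiner `k`-Hosoya polynomial `∑_{m ≥ 0} d_k(G,m) x^m`, written as
`∑_{S ⊆ V(G), |S| = k} x^{d(S)}`. -/
noncomputable def SH {V : Type*} [Fintype V] [DecidableEq V] (k : ℕ) (G : SimpleGraph V) :
    Polynomial ℝ :=
  ∑ S ∈ Finset.powersetCard k (Finset.univ : Finset V), Polynomial.X ^ (steinerDist G (S : Set V))

/-- The Wiener index `W(G) = ∑_{{u,v} ⊆ V(G)} d(u,v)` (each unordered pair counted once). -/
noncomputable def wiener {V : Type*} [Fintype V] [DecidableEq V] (G : SimpleGraph V) : ℝ :=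
  (∑ p ∈ Finset.univ.offDiag, (G.dist p.1 p.2 : ℝ)) / 2

/-- `\overline{WW}(G) = ∑_{{u,v} ⊆ V(G)} d(u,v)²`. -/
noncomputable def WWbar {V : Type*} [Fintype V] [DecidableEq V] (G : SimpleGraph V) : ℝ :=
  (∑ p ∈ Finset.univ.offDiag, (G.dist p.1 p.2 : ℝ) ^ 2) / 2

/-- The set of ordered triples of pairwise distinct vertices. -/
def O3 (V : Type*) [Fintype V] [DecidableEq V] : Finset (V × V × V) :=
  Finset.univ.filter fun t => t.1 ≠ t.2.1 ∧ t.1 ≠ t.2.2 ∧ t.2.1 ≠ t.2.2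

/-- `\widehat{WW}(G) = ∑_{(u,v,w) ∈ O₃(G)} d(u,v)·d(u,w)`. -/
noncomputable def WWhat {V : Type*} [Fintype V] [DecidableEq V] (G : SimpleGraph V) : ℝ :=
  ∑ t ∈ O3 V, (G.dist t.1 t.2.1 : ℝ) * (G.dist t.1 t.2.2 : ℝ)

/-- `z` is a median of the triple `u, v, w`: it lies on a shortest `u,v`-path, a shortest
`u,w`-path and a shortest `v,w`-path. -/
def IsMedian {V : Type*} (G : SimpleGraph V) (u v w z : V) : Prop :=
  G.dist u z + G.dist z v = G.dist u v ∧
  G.dist u z + G.dist z w = G.dist u w ∧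
  G.dist v z + G.dist z w = G.dist v w

/-- A modular graph: a connected graph in which every triple of vertices has a median. -/
def IsModular {V : Type*} (G : SimpleGraph V) : Prop :=
  G.Connected ∧ ∀ u v w : V, ∃ z : V, IsMedian G u v w z

/-- The hypercube graph `Q_n` on `Fin n → Bool`: two vertices are adjacent iff they differ
in exactly one coordinate. -/
def hypercubeGraph (n : ℕ) : SimpleGraph (Fin n → Bool) :=
  SimpleGraph.fromRel fun x y => ∃! i, x i ≠ y i

/-- A partial cube: a connected graph isometrically embeddable into a hypercube. -/
def IsPartialCube {V : Type*} (G : SimpleGraph V) : Prop :=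
  G.Connected ∧ ∃ (n : ℕ) (f : V → (Fin n → Bool)),
    ∀ u v : V, (hypercubeGraph n).dist (f u) (f v) = G.dist u v

/-- The Djoković–Winkler relation Θ on (edges viewed as) unordered pairs:
`s(u₁,v₁) Θ s(u₂,v₂)` iff `d(u₁,u₂) + d(v₁,v₂) ≠ d(u₁,v₂) + d(v₁,u₂)`. -/
def theta {V : Type*} (G : SimpleGraph V) (e f : Sym2 V) : Prop :=
  ∃ u₁ v₁ u₂ v₂ : V, e = s(u₁, v₁) ∧ f = s(u₂, v₂) ∧
    G.dist u₁ u₂ + G.dist v₁ v₂ ≠ G.dist u₁ v₂ + G.dist v₁ u₂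

/-- `E` together with the component data `U`, `U'` is the family of Θ-classes of the
partial cube `G`: each `E i` is a Θ-class of edges, the classes are pairwise distinct and
cover the edge set, and `U i`, `U' i` are (the vertex sets of) the two connected components
of `G - E i`. -/
def IsThetaClassSetup {V : Type*} (G : SimpleGraph V) (d : ℕ)
    (E : Fin d → Set (Sym2 V)) (U U' : Fin d → Set V) : Prop :=
  (∀ i, ∃ e ∈ G.edgeSet, E i = {f | f ∈ G.edgeSet ∧ theta G f e}) ∧
  Function.Injective E ∧
  G.edgeSet = ⋃ i, E i ∧
  ∀ i, ∃ c c' : (G.deleteEdges (E i)).ConnectedComponent, c ≠ c' ∧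
    U i = c.supp ∧ U' i = c'.supp ∧
    ∀ b : (G.deleteEdges (E i)).ConnectedComponent, b = c ∨ b = c'


section SteinerAux

open Finset SimpleGraph

/-- In a connected graph with finitely many edges, the perimeter of any vertex triple is
at most twice the number of edges. -/
lemma dist_sum_le_two_mul_ncard' {W : Type*} {K : SimpleGraph W} (hc : K.Connected)
    (hfin : K.edgeSet.Finite) (u v w : W) :
    K.dist u v + K.dist u w + K.dist v w ≤ 2 * K.edgeSet.ncard := by
  classical
  obtain ⟨p, hp, hpl⟩ := hc.exists_path_of_dist u v
  have hne : p.support.toFinset.Nonempty := ⟨u, by simp⟩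
  obtain ⟨x, hx, hxmin⟩ := p.support.toFinset.exists_min_image (fun y => K.dist w y) hne
  rw [List.mem_toFinset] at hx
  obtain ⟨q, hq, hql⟩ := hc.exists_path_of_dist w x
  have hmeet : ∀ y, y ∈ q.support → y ∈ p.support → y = x := by
    intro y hyq hyp
    have h1 : K.dist w y ≤ (q.takeUntil y hyq).length := dist_le _
    have h2 : K.dist y x ≤ (q.dropUntil y hyq).length := dist_le _
    have h3 : (q.takeUntil y hyq).length + (q.dropUntil y hyq).length = q.length := by
      have := congr_arg Walk.length (q.take_spec hyq)
      rwa [Walk.length_append] at this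
    have h4 : K.dist w x ≤ K.dist w y := hxmin y (by simpa using hyp)
    have h5 : K.dist y x = 0 := by omega
    exact (hc.dist_eq_zero_iff).mp h5
  have hxsplit : K.dist u x + K.dist x v = K.dist u v := by
    have h1 : K.dist u x ≤ (p.takeUntil x hx).length := dist_le _
    have h2 : K.dist x v ≤ (p.dropUntil x hx).length := dist_le _
    have h3 : (p.takeUntil x hx).length + (p.dropUntil x hx).length = p.length := by
      have := congr_arg Walk.length (p.take_spec hx)
      rwa [Walk.length_append] at this
    have h4 := hc.dist_triangle (u := u) (v := x) (w := v)
    omega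
  have hdisj : Disjoint p.edges.toFinset q.edges.toFinset := by
    rw [Finset.disjoint_left]
    intro e hep heq
    rw [List.mem_toFinset] at hep heq
    induction e with
    | h a b =>
      have ha : a = x := hmeet a (q.fst_mem_support_of_mem_edges heq)
        (p.fst_mem_support_of_mem_edges hep)
      have hb : b = x := hmeet b (q.snd_mem_support_of_mem_edges heq)
        (p.snd_mem_support_of_mem_edges hep)
      subst ha; subst hb
      have := p.edges_subset_edgeSet hep
      simp at this
  have hcard : p.length + q.length ≤ K.edgeSet.ncard := by
    have hsub : p.edges.toFinset ∪ q.edges.toFinset ⊆ hfin.toFinset := by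
      intro e he
      rcases Finset.mem_union.mp he with h | h <;> rw [List.mem_toFinset] at h
      · exact hfin.mem_toFinset.mpr (p.edges_subset_edgeSet h)
      · exact hfin.mem_toFinset.mpr (q.edges_subset_edgeSet h)
    have h1 := Finset.card_le_card hsub
    rw [Finset.card_union_of_disjoint hdisj] at h1
    rw [List.toFinset_card_of_nodup hp.edges_nodup, List.toFinset_card_of_nodup hq.edges_nodup,
      p.length_edges, q.length_edges] at h1
    rwa [Set.ncard_eq_toFinset_card _ hfin]
  have t1 : K.dist u w ≤ K.dist u x + K.dist x w := hc.dist_triangle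
  have t2 : K.dist v w ≤ K.dist v x + K.dist x w := hc.dist_triangle
  have c1 : K.dist x w = K.dist w x := K.dist_comm ..
  have c2 : K.dist v x = K.dist x v := K.dist_comm ..
  omega

/-- In a modular graph, twice the Steiner distance of a triple equals its perimeter. -/
lemma two_mul_steinerDist {V : Type*} [Fintype V] (G : SimpleGraph V) (hG : IsModular G)
    (u v w : V) :
    2 * steinerDist G {u, v, w} = G.dist u v + G.dist u w + G.dist v w := by
  classical
  obtain ⟨hc, hmed⟩ := hG
  obtain ⟨z, h1, h2, h3⟩ := hmed u v w
  obtain ⟨pu, _, hpu⟩ := hc.exists_path_of_dist z u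
  obtain ⟨pv, _, hpv⟩ := hc.exists_path_of_dist z v
  obtain ⟨pw, _, hpw⟩ := hc.exists_path_of_dist z w
  set H : G.Subgraph := pu.toSubgraph ⊔ pv.toSubgraph ⊔ pw.toSubgraph with hH
  have hHconn : H.Connected := by
    apply Subgraph.connected_sup _ pw.toSubgraph_connected.preconnected
      ⟨z, by simp, pw.start_mem_verts_toSubgraph⟩
    exact (Subgraph.connected_sup pu.toSubgraph_connected.preconnected pv.toSubgraph_connected.preconnected
      ⟨z, pu.start_mem_verts_toSubgraph, pv.start_mem_verts_toSubgraph⟩).preconnected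
  have hHsub : ({u, v, w} : Set V) ⊆ H.verts := by
    intro y hy
    rcases hy with rfl | rfl | rfl
    · exact Or.inl (Or.inl (pu.end_mem_verts_toSubgraph))
    · exact Or.inl (Or.inr (pv.end_mem_verts_toSubgraph))
    · exact Or.inr (pw.end_mem_verts_toSubgraph)
  have hedge : H.edgeSet.ncard ≤ G.dist z u + G.dist z v + G.dist z w := by
    have e1 : H.edgeSet = pu.toSubgraph.edgeSet ∪ pv.toSubgraph.edgeSet
        ∪ pw.toSubgraph.edgeSet := by
      rw [hH, Subgraph.edgeSet_sup, Subgraph.edgeSet_sup]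
    have hcard : ∀ {a : V} (p : G.Walk z a), p.toSubgraph.edgeSet.ncard ≤ p.length := by
      intro a p
      rw [p.edgeSet_toSubgraph]
      have : {e | e ∈ p.edges} = (p.edges.toFinset : Set (Sym2 V)) := by ext e; simp
      rw [Walk.edgeSet, this, Set.ncard_coe_finset]
      calc p.edges.toFinset.card ≤ p.edges.length := p.edges.toFinset_card_le
        _ = p.length := p.length_edges
    calc H.edgeSet.ncard
        ≤ (pu.toSubgraph.edgeSet ∪ pv.toSubgraph.edgeSet).ncard
            + pw.toSubgraph.edgeSet.ncard := by rw [e1]; exact Set.ncard_union_le _ _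
      _ ≤ pu.toSubgraph.edgeSet.ncard + pv.toSubgraph.edgeSet.ncard
            + pw.toSubgraph.edgeSet.ncard := by
          have := Set.ncard_union_le pu.toSubgraph.edgeSet pv.toSubgraph.edgeSet
          omega
      _ ≤ G.dist z u + G.dist z v + G.dist z w := by
          have := hcard pu; have := hcard pv; have := hcard pw; omega
  have hmem : H.edgeSet.ncard ∈
      {n | ∃ H : G.Subgraph, H.Connected ∧ ({u, v, w} : Set V) ⊆ H.verts ∧ H.edgeSet.ncard = n} :=
    ⟨H, hHconn, hHsub, rfl⟩
  have hub : steinerDist G {u, v, w} ≤ G.dist z u + G.dist z v + G.dist z w :=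
    le_trans (Nat.sInf_le hmem) hedge
  have hlb : G.dist u v + G.dist u w + G.dist v w ≤ 2 * steinerDist G {u, v, w} := by
    have hmem' := Nat.sInf_mem ⟨_, hmem⟩
    obtain ⟨H', hH'c, hH'sub, hH'card⟩ := hmem'
    have hu : u ∈ H'.verts := hH'sub (by simp)
    have hv : v ∈ H'.verts := hH'sub (by simp)
    have hw : w ∈ H'.verts := hH'sub (by simp)
    have hfin : H'.coe.edgeSet.Finite := Set.toFinite _
    have hdle : ∀ (a b : H'.verts), G.dist (a : V) (b : V) ≤ H'.coe.dist a b := by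
      intro a b
      obtain ⟨q, _, hql⟩ := hH'c.coe.exists_path_of_dist a b
      calc G.dist (a : V) (b : V) ≤ (q.map H'.hom).length := dist_le _
        _ = q.length := q.length_map _
        _ = _ := hql
    have hkey := dist_sum_le_two_mul_ncard' hH'c.coe hfin ⟨u, hu⟩ ⟨v, hv⟩ ⟨w, hw⟩
    have hncard : H'.coe.edgeSet.ncard = H'.edgeSet.ncard := by
      rw [← H'.image_coe_edgeSet_coe]
      exact (Set.ncard_image_of_injective _ (Sym2.map.injective Subtype.val_injective)).symm
    have d1 : G.dist u v ≤ H'.coe.dist ⟨u, hu⟩ ⟨v, hv⟩ := hdle ⟨u, hu⟩ ⟨v, hv⟩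
    have d2 : G.dist u w ≤ H'.coe.dist ⟨u, hu⟩ ⟨w, hw⟩ := hdle ⟨u, hu⟩ ⟨w, hw⟩
    have d3 : G.dist v w ≤ H'.coe.dist ⟨v, hv⟩ ⟨w, hw⟩ := hdle ⟨v, hv⟩ ⟨w, hw⟩
    rw [steinerDist, ← hH'card, ← hncard]
    omega
  have hperim : G.dist z u + G.dist z v + G.dist z w + (G.dist z u + G.dist z v + G.dist z w)
      = G.dist u v + G.dist u w + G.dist v w := by
    have c1 : G.dist u z = G.dist z u := G.dist_comm ..
    have c2 : G.dist v z = G.dist z v := G.dist_comm ..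
    omega
  omega

lemma sum_O3_pair {V : Type*} [Fintype V] [DecidableEq V] (F : V → V → ℝ) :
    ∑ t ∈ O3 V, F t.1 t.2.1
      = ((Fintype.card V - 2 : ℕ) : ℝ) * ∑ p ∈ Finset.univ.offDiag, F p.1 p.2 := by
  classical
  have hoff : (Finset.univ.offDiag : Finset (V × V)) = Finset.univ.filter (fun p => p.1 ≠ p.2) := by
    ext p; simp [Finset.mem_offDiag]
  rw [O3, hoff]
  simp only [Finset.sum_filter, Fintype.sum_prod_type, Finset.mul_sum]
  refine Finset.sum_congr rfl fun u _ => Finset.sum_congr rfl fun v _ => ?_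
  by_cases huv : u = v
  · simp [huv]
  · simp only [huv, Ne, not_false_iff, if_true, true_and]
    have : ∀ w : V, (if u ≠ w ∧ v ≠ w then F u v else 0)
        = if w ∈ Finset.univ \ {u, v} then F u v else 0 := by
      intro w
      congr 1
      simp [eq_comm, and_comm]
    rw [Finset.sum_congr rfl fun w _ => this w, ← Finset.sum_filter, Finset.filter_mem_eq_inter,
      Finset.univ_inter, Finset.sum_const, Finset.card_sdiff_of_subset (by simp)]
    have h2 : ({u, v} : Finset V).card = 2 := by
      rw [Finset.card_insert_of_notMem (by simp [huv]), Finset.card_singleton]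
    rw [Finset.card_univ, h2, nsmul_eq_mul]

lemma fiber_eq {V : Type*} [Fintype V] [DecidableEq V] {u v w : V}
    (huv : u ≠ v) (huw : u ≠ w) (hvw : v ≠ w) :
    (O3 V).filter (fun t => ({t.1, t.2.1, t.2.2} : Finset V) = {u, v, w}) =
      ({(u,v,w),(u,w,v),(v,u,w),(v,w,u),(w,u,v),(w,v,u)} : Finset (V × V × V)) := by
  have hvu := huv.symm
  have hwu := huw.symm
  have hwv := hvw.symm
  ext ⟨a,b,c⟩
  simp only [Finset.mem_filter, O3, Finset.mem_univ, true_and,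
    Finset.mem_insert, Finset.mem_singleton, Prod.mk.injEq]
  constructor
  · rintro ⟨⟨hab, hac, hbc⟩, hs⟩
    have ha : a = u ∨ a = v ∨ a = w := by
      have : a ∈ ({u,v,w} : Finset V) := hs ▸ (by simp)
      simpa using this
    have hb : b = u ∨ b = v ∨ b = w := by
      have : b ∈ ({u,v,w} : Finset V) := hs ▸ (by simp)
      simpa using this
    have hc : c = u ∨ c = v ∨ c = w := by
      have : c ∈ ({u,v,w} : Finset V) := hs ▸ (by simp)
      simpa using this
    rcases ha with rfl|rfl|rfl <;> rcases hb with rfl|rfl|rfl <;> rcases hc with rfl|rfl|rfl <;>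
      simp_all
  · rintro (⟨rfl,rfl,rfl⟩|⟨rfl,rfl,rfl⟩|⟨rfl,rfl,rfl⟩|⟨rfl,rfl,rfl⟩|⟨rfl,rfl,rfl⟩|⟨rfl,rfl,rfl⟩) <;>
      refine ⟨⟨by assumption, by assumption, by assumption⟩, ?_⟩ <;>
      · ext x; simp; try tauto

lemma sum_fiber {V : Type*} [Fintype V] [DecidableEq V] {u v w : V}
    (huv : u ≠ v) (huw : u ≠ w) (hvw : v ≠ w) (g : V × V × V → ℝ) :
    ∑ t ∈ (O3 V).filter (fun t => ({t.1, t.2.1, t.2.2} : Finset V) = {u, v, w}), g t =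
      g (u,v,w) + g (u,w,v) + g (v,u,w) + g (v,w,u) + g (w,u,v) + g (w,v,u) := by
  have hvu := huv.symm
  have hwu := huw.symm
  have hwv := hvw.symm
  rw [fiber_eq huv huw hvw]
  rw [Finset.sum_insert (by simp [Prod.ext_iff]; tauto),
    Finset.sum_insert (by simp [Prod.ext_iff]; tauto),
    Finset.sum_insert (by simp [Prod.ext_iff]; tauto),
    Finset.sum_insert (by simp [Prod.ext_iff]; tauto),
    Finset.sum_insert (by simp [Prod.ext_iff]; tauto),
    Finset.sum_singleton]
  ring

end SteinerAux

/-- For a modular graph `G` with at least three vertices,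
`SWW₃(G) = ((|V|-2)/4)·W(G) + ((|V|-2)/8)·\overline{WW}(G) + (1/8)·\widehat{WW}(G)`. -/
theorem steiner_three_hyper_wiener_modular
    {V : Type*} [Fintype V] [DecidableEq V] (G : SimpleGraph V)
    (hG : IsModular G) (hV : 3 ≤ Fintype.card V) :
    SWW 3 G = ((Fintype.card V : ℝ) - 2) / 4 * wiener G
      + ((Fintype.card V : ℝ) - 2) / 8 * WWbar G + 1 / 8 * WWhat G := by
  classical
  obtain ⟨hc, hmed⟩ := hG
  set n := Fintype.card V with hn
  set gfun : V × V × V → ℝ := fun t =>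
    (G.dist t.1 t.2.1 : ℝ) / 4 + (G.dist t.1 t.2.1 : ℝ) ^ 2 / 8
      + (G.dist t.1 t.2.1 : ℝ) * (G.dist t.1 t.2.2 : ℝ) / 4 with hgfun
  have hmaps : ∀ t ∈ O3 V, ({t.1, t.2.1, t.2.2} : Finset V) ∈
      Finset.powersetCard 3 (Finset.univ : Finset V) := by
    intro t ht
    rw [O3, Finset.mem_filter] at ht
    obtain ⟨-, h1, h2, h3⟩ := ht
    rw [Finset.mem_powersetCard_univ]
    exact Finset.card_eq_three.mpr ⟨t.1, t.2.1, t.2.2, h1, h2, h3, rfl⟩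
  have key : ∀ S ∈ Finset.powersetCard 3 (Finset.univ : Finset V),
      ∑ t ∈ (O3 V).filter (fun t => ({t.1, t.2.1, t.2.2} : Finset V) = S), gfun t =
        (steinerDist G (S : Set V) : ℝ) + (steinerDist G (S : Set V) : ℝ) ^ 2 := by
    intro S hS
    obtain ⟨u, v, w, huv, huw, hvw, rfl⟩ :=
      Finset.card_eq_three.mp (Finset.mem_powersetCard_univ.mp hS)
    have hcoe : ((({u, v, w} : Finset V) : Set V)) = ({u, v, w} : Set V) := by simp
    have h2sd := two_mul_steinerDist G ⟨hc, hmed⟩ u v w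
    have hsd : (steinerDist G ((({u, v, w} : Finset V)) : Set V) : ℝ)
        = ((G.dist u v : ℝ) + (G.dist u w : ℝ) + (G.dist v w : ℝ)) / 2 := by
      rw [hcoe]
      have h' : ((2 * steinerDist G ({u, v, w} : Set V) : ℕ) : ℝ)
          = ((G.dist u v + G.dist u w + G.dist v w : ℕ) : ℝ) := by exact_mod_cast h2sd
      push_cast at h'
      linarith
    have cvu : (G.dist v u : ℝ) = (G.dist u v : ℝ) := by
      exact_mod_cast (SimpleGraph.dist_comm (G := G) (u := v) (v := u))
    have cwu : (G.dist w u : ℝ) = (G.dist u w : ℝ) := by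
      exact_mod_cast (SimpleGraph.dist_comm (G := G) (u := w) (v := u))
    have cwv : (G.dist w v : ℝ) = (G.dist v w : ℝ) := by
      exact_mod_cast (SimpleGraph.dist_comm (G := G) (u := w) (v := v))
    rw [sum_fiber huv huw hvw, hsd]
    simp only [hgfun, cvu, cwu, cwv]
    ring
  have hfib := Finset.sum_fiberwise_of_maps_to hmaps gfun
  have hsum1 : ∑ t ∈ O3 V, (G.dist t.1 t.2.1 : ℝ)
      = ((n - 2 : ℕ) : ℝ) * (2 * wiener G) := by
    rw [sum_O3_pair (fun x y => (G.dist x y : ℝ)), wiener]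
    ring
  have hsum2 : ∑ t ∈ O3 V, (G.dist t.1 t.2.1 : ℝ) ^ 2
      = ((n - 2 : ℕ) : ℝ) * (2 * WWbar G) := by
    rw [sum_O3_pair (fun x y => (G.dist x y : ℝ) ^ 2), WWbar]
    ring
  have hsum3 : ∑ t ∈ O3 V, gfun t
      = ((n - 2 : ℕ) : ℝ) * (2 * wiener G) / 4 + ((n - 2 : ℕ) : ℝ) * (2 * WWbar G) / 8
        + WWhat G / 4 := by
    have e1 : ∑ t ∈ O3 V, gfun t
        = (∑ t ∈ O3 V, (G.dist t.1 t.2.1 : ℝ)) / 4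
          + (∑ t ∈ O3 V, (G.dist t.1 t.2.1 : ℝ) ^ 2) / 8
          + (∑ t ∈ O3 V, (G.dist t.1 t.2.1 : ℝ) * (G.dist t.1 t.2.2 : ℝ)) / 4 := by
      simp only [hgfun]
      rw [Finset.sum_add_distrib, Finset.sum_add_distrib, Finset.sum_div, Finset.sum_div,
        Finset.sum_div]
    rw [e1, hsum1, hsum2, WWhat]
  have hcast : ((n - 2 : ℕ) : ℝ) = (n : ℝ) - 2 := by
    rw [Nat.cast_sub (by omega)]; norm_num
  have hX : ∑ S ∈ Finset.powersetCard 3 (Finset.univ : Finset V),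
      ((steinerDist G (S : Set V) : ℝ) + (steinerDist G (S : Set V) : ℝ) ^ 2)
      = ∑ t ∈ O3 V, gfun t := by
    rw [← hfib]
    exact (Finset.sum_congr rfl key).symm
  rw [SWW]
  have hsplit : ∑ S ∈ Finset.powersetCard 3 (Finset.univ : Finset V),
      ((steinerDist G (S : Set V) : ℝ) + (steinerDist G (S : Set V) : ℝ) ^ 2)
      = (∑ S ∈ Finset.powersetCard 3 (Finset.univ : Finset V), (steinerDist G (S : Set V) : ℝ))
        + ∑ S ∈ Finset.powersetCard 3 (Finset.univ : Finset V),
            (steinerDist G (S : Set V) : ℝ) ^ 2 := Finset.sum_add_distrib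
  rw [hsplit] at hX
  rw [hsum3, hcast] at hX
  linarith [hX]
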